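/- Empirical dual recursion (Lemma 5): let X be a finite state space partitioned into H, U, E with U ∪ E absorbing, let P̂_{t,x} be probability vectors on X for t ∈ {0,…,T_max−1}, x ∈ H, and let r ≥ 0. Define the empirical robust safety function Ŝ^R with rectangular Wasserstein (Hamming) ambiguity sets of radius r around the centers P̂_{t,x}. Then with c(x,l) = 1 if l ∈ U and 0 otherwise, and Ŝ^R(t+1,l) = 0 for l ∈ U ∪ E, for every t ∈ {0,…,T_max−1} and x ∈ H: Ŝ^R(t,x) = inf over λ ≥ 0 of [ λ r + Σ_{y∈X} ( max_{l∈X} ( −λ d(y,l) + c(x,l) + Ŝ^R(t+1,l) ) ) P̂_{t,x}(y) ], where d is the Hamming metric. -/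

import Mathlib

open Finset

/-- A probability vector on a finite set `X`. -/
def IsProbVec {X : Type*} [Fintype X] (μ : X → ℝ) : Prop :=
  (∀ x, 0 ≤ μ x) ∧ ∑ x, μ x = 1

/-- A coupling of two probability vectors on a finite set `X`. -/
def IsCoupling {X : Type*} [Fintype X] (μ ν : X → ℝ) (Γ : X × X → ℝ) : Prop :=
  (∀ p, 0 ≤ Γ p) ∧ (∀ y, ∑ z, Γ (y, z) = μ y) ∧ (∀ z, ∑ y, Γ (y, z) = ν z)

/-- `d` is a metric on `X`. -/
def IsMetricOn {X : Type*} (d : X → X → ℝ) : Prop :=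
  (∀ x y, 0 ≤ d x y) ∧ (∀ x y, d x y = 0 ↔ x = y) ∧ (∀ x y, d x y = d y x) ∧
    (∀ x y z, d x z ≤ d x y + d y z)

/-- The 1-Wasserstein distance between probability vectors on a finite set. -/
noncomputable def Wass {X : Type*} [Fintype X] (d : X → X → ℝ) (μ ν : X → ℝ) : ℝ :=
  sInf {c | ∃ Γ : X × X → ℝ, IsCoupling μ ν Γ ∧ c = ∑ p : X × X, Γ p * d p.1 p.2}


/-- The Hamming distance on `X`. -/
def hamming {X : Type*} [DecidableEq X] (x y : X) : ℝ := if x = y then 0 else 1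

/-- The probability, under the time-inhomogeneous kernel family `Q`, that the chain started at
state `x` at time `t` hits the unsafe set `U` before hitting the goal set `E` within `n` further
steps (states in `U ∪ E` are treated as absorbing). -/
noncomputable def hitProbAux {X : Type*} [Fintype X] [DecidableEq X] (U E : Finset X)
    (Q : ℕ → X → X → ℝ) : ℕ → ℕ → X → ℝ
  | 0, _, x => if x ∈ U then 1 else 0
  | n + 1, t, x =>
      if x ∈ U then 1
      else if x ∈ E then 0
      else ∑ y, Q t x y * hitProbAux U E Q n (t + 1) y

/-- The robust safety function: the supremum, over all perturbed kernel families whose rows (for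
living states) lie in the Wasserstein (Hamming) ball of radius `δ` around the nominal rows of `P`,
of the probability of hitting `U` before `E`, started from state `x` at time `t`, with almost-sure
hitting-time bound `Tmax`. -/
noncomputable def robustSafety {X : Type*} [Fintype X] [DecidableEq X] (U E : Finset X)
    (P : ℕ → X → X → ℝ) (δ : ℝ) (Tmax : ℕ) (t : ℕ) (x : X) : ℝ :=
  sSup {s | ∃ Q : ℕ → X → X → ℝ,
    (∀ k y, IsProbVec (Q k y)) ∧
    (∀ k y, y ∉ U → y ∉ E → Wass hamming (Q k y) (P k y) ≤ δ) ∧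
    s = hitProbAux U E Q (Tmax - t) t x}


section Basic

set_option linter.unusedSectionVars false
variable {X : Type*} [Fintype X] [DecidableEq X]

lemma hamming_nonneg (x y : X) : 0 ≤ hamming x y := by
  unfold hamming; split <;> norm_num

lemma hamming_le_one (x y : X) : hamming x y ≤ 1 := by
  unfold hamming; split <;> norm_num

lemma hamming_self (x : X) : hamming x x = 0 := by simp [hamming]

lemma hamming_comm (x y : X) : hamming x y = hamming y x := by
  simp [hamming, eq_comm]

/-- The set of primal values. -/
def primSet (v p : X → ℝ) (r : ℝ) : Set ℝ :=
  {s | ∃ q : X → ℝ, IsProbVec q ∧ Wass hamming q p ≤ r ∧ s = ∑ y, q y * v y}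

lemma wassSet_bddBelow (μ ν : X → ℝ) :
    BddBelow {c | ∃ Γ : X × X → ℝ, IsCoupling μ ν Γ ∧ c = ∑ p : X × X, Γ p * hamming p.1 p.2} :=
  ⟨0, fun c hc => by
    obtain ⟨Γ, hΓ, rfl⟩ := hc
    exact Finset.sum_nonneg fun p _ => mul_nonneg (hΓ.1 p) (hamming_nonneg _ _)⟩

lemma wass_self_le {μ : X → ℝ} (hμ : ∀ y, 0 ≤ μ y) {r : ℝ} (hr : 0 ≤ r) :
    Wass hamming μ μ ≤ r := by
  have h0 : (0:ℝ) ∈ {c | ∃ Γ : X × X → ℝ, IsCoupling μ μ Γ ∧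
      c = ∑ p : X × X, Γ p * hamming p.1 p.2} := by
    refine ⟨fun p => if p.1 = p.2 then μ p.1 else 0, ⟨?_, ?_, ?_⟩, ?_⟩
    · intro p; dsimp only; split
      · exact hμ _
      · exact le_refl 0
    · intro y; simp
    · intro z; simp
    · symm
      apply Finset.sum_eq_zero
      intro p _
      by_cases h : p.1 = p.2 <;> simp [h, hamming]
  exact le_trans (csInf_le (wassSet_bddBelow _ _) h0) hr

end Basic

section DP

set_option linter.unusedSectionVars false
variable {X : Type*} [Fintype X] [DecidableEq X]

lemma primSet_le {v p : X → ℝ} {r B : ℝ} (hv : ∀ y, v y ≤ B) {s : ℝ}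
    (hs : s ∈ primSet v p r) : s ≤ B := by
  obtain ⟨q, hq, _, rfl⟩ := hs
  calc ∑ y, q y * v y ≤ ∑ y, q y * B :=
        Finset.sum_le_sum fun y _ => mul_le_mul_of_nonneg_left (hv y) (hq.1 y)
    _ = B := by rw [← Finset.sum_mul, hq.2, one_mul]

lemma primSet_nonneg {v p : X → ℝ} {r : ℝ} (hv : ∀ y, 0 ≤ v y) {s : ℝ}
    (hs : s ∈ primSet v p r) : 0 ≤ s := by
  obtain ⟨q, hq, _, rfl⟩ := hs
  exact Finset.sum_nonneg fun y _ => mul_nonneg (hq.1 y) (hv y)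

lemma primSet_nonempty {v p : X → ℝ} {r : ℝ} (hp : IsProbVec p) (hr : 0 ≤ r) :
    (primSet v p r).Nonempty :=
  ⟨∑ y, p y * v y, p, hp, wass_self_le hp.1 hr, rfl⟩

lemma primSet_bddAbove {v p : X → ℝ} {r B : ℝ} (hv : ∀ y, v y ≤ B) :
    BddAbove (primSet v p r) :=
  ⟨B, fun _ hs => primSet_le hv hs⟩

/-- The dynamic-programming value function. -/
noncomputable def Wfun (U E : Finset X) (P : ℕ → X → X → ℝ) (r : ℝ) : ℕ → ℕ → X → ℝ
  | 0, _, z => if z ∈ U then 1 else 0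
  | (n+1), k, z =>
      if z ∈ U then 1 else if z ∈ E then 0 else
        sSup (primSet (Wfun U E P r n (k+1)) (P k z) r)

lemma Wfun_nonneg (U E : Finset X) (P : ℕ → X → X → ℝ) (r : ℝ) :
    ∀ n k z, 0 ≤ Wfun U E P r n k z := by
  intro n
  induction n with
  | zero => intro k z; simp only [Wfun]; split <;> norm_num
  | succ n ih =>
    intro k z
    simp only [Wfun]
    split
    · norm_num
    split
    · norm_num
    · exact Real.sSup_nonneg fun s hs => primSet_nonneg (fun y => ih (k+1) y) hs

lemma Wfun_le_one (U E : Finset X) (P : ℕ → X → X → ℝ) (r : ℝ)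
    (hP : ∀ k y, IsProbVec (P k y)) (hr : 0 ≤ r) :
    ∀ n k z, Wfun U E P r n k z ≤ 1 := by
  intro n
  induction n with
  | zero => intro k z; simp only [Wfun]; split <;> norm_num
  | succ n ih =>
    intro k z
    simp only [Wfun]
    split
    · norm_num
    split
    · norm_num
    · exact csSup_le (primSet_nonempty (hP k z) hr) fun s hs => primSet_le (fun y => ih (k+1) y) hs

lemma hitProbAux_nonneg (U E : Finset X) (Q : ℕ → X → X → ℝ)
    (hQ : ∀ k y z, 0 ≤ Q k y z) : ∀ n t x, 0 ≤ hitProbAux U E Q n t x := by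
  intro n
  induction n with
  | zero => intro t x; simp only [hitProbAux]; split <;> norm_num
  | succ n ih =>
    intro t x
    simp only [hitProbAux]
    split
    · norm_num
    split
    · norm_num
    · exact Finset.sum_nonneg fun y _ => mul_nonneg (hQ t x y) (ih (t+1) y)

lemma hitProbAux_le_one (U E : Finset X) (Q : ℕ → X → X → ℝ)
    (hQ : ∀ k y, IsProbVec (Q k y)) : ∀ n t x, hitProbAux U E Q n t x ≤ 1 := by
  intro n
  induction n with
  | zero => intro t x; simp only [hitProbAux]; split <;> norm_num
  | succ n ih =>
    intro t x
    simp only [hitProbAux]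
    split
    · norm_num
    split
    · norm_num
    · calc ∑ y, Q t x y * hitProbAux U E Q n (t+1) y ≤ ∑ y, Q t x y * 1 :=
            Finset.sum_le_sum fun y _ =>
              mul_le_mul_of_nonneg_left (ih (t+1) y) ((hQ t x).1 y)
        _ = 1 := by simp [(hQ t x).2]

lemma hitProbAux_le_Wfun (U E : Finset X) (P Q : ℕ → X → X → ℝ) (r : ℝ)
    (hP : ∀ k y, IsProbVec (P k y)) (hr : 0 ≤ r)
    (hQp : ∀ k y, IsProbVec (Q k y))
    (hQw : ∀ k y, y ∉ U → y ∉ E → Wass hamming (Q k y) (P k y) ≤ r) :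
    ∀ n k z, hitProbAux U E Q n k z ≤ Wfun U E P r n k z := by
  intro n
  induction n with
  | zero => intro k z; simp only [hitProbAux, Wfun]; exact le_refl _
  | succ n ih =>
    intro k z
    simp only [hitProbAux, Wfun]
    split
    · exact le_refl _
    split
    · exact le_refl _
    · rename_i hzU hzE
      calc ∑ y, Q k z y * hitProbAux U E Q n (k+1) y
          ≤ ∑ y, Q k z y * Wfun U E P r n (k+1) y :=
            Finset.sum_le_sum fun y _ =>
              mul_le_mul_of_nonneg_left (ih (k+1) y) ((hQp k z).1 y)
        _ ≤ sSup (primSet (Wfun U E P r n (k+1)) (P k z) r) :=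
            le_csSup (primSet_bddAbove (fun y => Wfun_le_one U E P r hP hr n (k+1) y))
              ⟨Q k z, hQp k z, hQw k z hzU hzE, rfl⟩

end DP

section DP2

set_option linter.unusedSectionVars false
variable {X : Type*} [Fintype X] [DecidableEq X]

lemma exists_good_family (U E : Finset X) (P : ℕ → X → X → ℝ) (r : ℝ)
    (hP : ∀ k y, IsProbVec (P k y)) (hr : 0 ≤ r) (Tmax : ℕ) {ε : ℝ} (hε : 0 < ε) :
    ∃ Q : ℕ → X → X → ℝ, (∀ k y, IsProbVec (Q k y)) ∧
      (∀ k y, y ∉ U → y ∉ E → Wass hamming (Q k y) (P k y) ≤ r) ∧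
      (∀ m k z, m + k = Tmax →
        Wfun U E P r m k z - m * ε ≤ hitProbAux U E Q m k z) := by
  have hex : ∀ k z, k < Tmax → z ∉ U → z ∉ E → ∃ q : X → ℝ, IsProbVec q ∧
      Wass hamming q (P k z) ≤ r ∧
      sSup (primSet (Wfun U E P r (Tmax - k - 1) (k+1)) (P k z) r) - ε
        < ∑ y, q y * Wfun U E P r (Tmax - k - 1) (k+1) y := by
    intro k z _ _ _
    obtain ⟨s, hs, hlt⟩ := exists_lt_of_lt_csSup
      (primSet_nonempty (v := Wfun U E P r (Tmax - k - 1) (k+1)) (hP k z) hr)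
      (show sSup (primSet (Wfun U E P r (Tmax - k - 1) (k+1)) (P k z) r) - ε
          < sSup (primSet (Wfun U E P r (Tmax - k - 1) (k+1)) (P k z) r) by linarith)
    obtain ⟨q, hq1, hq2, rfl⟩ := hs
    exact ⟨q, hq1, hq2, hlt⟩
  classical
  refine ⟨fun k z => if h : k < Tmax ∧ z ∉ U ∧ z ∉ E then
    Classical.choose (hex k z h.1 h.2.1 h.2.2) else P k z, ?_, ?_, ?_⟩
  · intro k z
    by_cases h : k < Tmax ∧ z ∉ U ∧ z ∉ E
    · simp only [dif_pos h]
      exact (Classical.choose_spec (hex k z h.1 h.2.1 h.2.2)).1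
    · simp only [dif_neg h]; exact hP k z
  · intro k z hzU hzE
    by_cases h : k < Tmax ∧ z ∉ U ∧ z ∉ E
    · simp only [dif_pos h]
      exact (Classical.choose_spec (hex k z h.1 h.2.1 h.2.2)).2.1
    · simp only [dif_neg h]; exact wass_self_le (hP k z).1 hr
  · intro m
    induction m with
    | zero =>
      intro k z _
      simp only [hitProbAux, Wfun, Nat.cast_zero, zero_mul, sub_zero]
      exact le_refl _
    | succ m ih =>
      intro k z hm
      have hk : k < Tmax := by omega
      simp only [hitProbAux, Wfun]
      split
      · push_cast; nlinarith
      split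
      · push_cast; nlinarith
      · rename_i hzU hzE
        have h : k < Tmax ∧ z ∉ U ∧ z ∉ E := ⟨hk, hzU, hzE⟩
        have hspec := Classical.choose_spec (hex k z h.1 h.2.1 h.2.2)
        set q := Classical.choose (hex k z h.1 h.2.1 h.2.2) with hqdef
        have hTk : Tmax - k - 1 = m := by omega
        rw [hTk] at hspec
        have hstep : ∀ y, Wfun U E P r m (k+1) y - m * ε ≤ hitProbAux U E
            (fun k z => if h : k < Tmax ∧ z ∉ U ∧ z ∉ E then
              Classical.choose (hex k z h.1 h.2.1 h.2.2) else P k z) m (k+1) y :=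
          fun y => ih (k+1) y (by omega)
        simp only [dif_pos h, ← hqdef]
        calc sSup (primSet (Wfun U E P r m (k+1)) (P k z) r) - (↑(m+1)) * ε
            ≤ (∑ y, q y * Wfun U E P r m (k+1) y) - (↑m) * ε := by
              push_cast; linarith [hspec.2.2]
          _ = ∑ y, q y * Wfun U E P r m (k+1) y - (∑ y, q y) * ((↑m) * ε) := by
              rw [hspec.1.2, one_mul]
          _ = ∑ y, (q y * Wfun U E P r m (k+1) y - q y * ((↑m) * ε)) := by
              rw [Finset.sum_sub_distrib, Finset.sum_mul]
          _ ≤ ∑ y, q y * hitProbAux U E (fun k z => if h : k < Tmax ∧ z ∉ U ∧ z ∉ E then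
                Classical.choose (hex k z h.1 h.2.1 h.2.2) else P k z) m (k+1) y := by
              apply Finset.sum_le_sum
              intro y _
              have := mul_le_mul_of_nonneg_left (hstep y) (hspec.1.1 y)
              rw [mul_sub] at this
              linarith
  
lemma robustSafety_eq_Wfun (U E : Finset X) (P : ℕ → X → X → ℝ) (r : ℝ)
    (hP : ∀ k y, IsProbVec (P k y)) (hr : 0 ≤ r) (Tmax k : ℕ) (hk : k ≤ Tmax) (z : X) :
    robustSafety U E P r Tmax k z = Wfun U E P r (Tmax - k) k z := by
  have hne : {s | ∃ Q : ℕ → X → X → ℝ,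
      (∀ k y, IsProbVec (Q k y)) ∧
      (∀ k y, y ∉ U → y ∉ E → Wass hamming (Q k y) (P k y) ≤ r) ∧
      s = hitProbAux U E Q (Tmax - k) k z}.Nonempty :=
    ⟨hitProbAux U E P (Tmax - k) k z, P, hP,
      fun k y _ _ => wass_self_le (hP k y).1 hr, rfl⟩
  apply le_antisymm
  · apply csSup_le hne
    rintro s ⟨Q, hQp, hQw, rfl⟩
    exact hitProbAux_le_Wfun U E P Q r hP hr hQp hQw (Tmax - k) k z
  · apply le_of_forall_pos_le_add
    intro ε hε
    have hε' : 0 < ε / (Tmax + 1) := by positivity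
    obtain ⟨Q, hQp, hQw, hQgood⟩ := exists_good_family U E P r hP hr Tmax hε'
    have hmem : hitProbAux U E Q (Tmax - k) k z ∈ {s | ∃ Q : ℕ → X → X → ℝ,
        (∀ k y, IsProbVec (Q k y)) ∧
        (∀ k y, y ∉ U → y ∉ E → Wass hamming (Q k y) (P k y) ≤ r) ∧
        s = hitProbAux U E Q (Tmax - k) k z} := ⟨Q, hQp, hQw, rfl⟩
    have hle : hitProbAux U E Q (Tmax - k) k z ≤ robustSafety U E P r Tmax k z :=
      le_csSup ⟨1, fun s hs => by
        obtain ⟨Q', hQ'p, _, rfl⟩ := hs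
        exact hitProbAux_le_one U E Q' hQ'p _ _ _⟩ hmem
    have hgood := hQgood (Tmax - k) k z (by omega)
    have hcast : ((Tmax - k : ℕ) : ℝ) * (ε / (Tmax + 1)) ≤ ε := by
      have h1 : ((Tmax - k : ℕ) : ℝ) ≤ (Tmax : ℝ) + 1 := by
        have : (Tmax - k : ℕ) ≤ Tmax + 1 := by omega
        exact_mod_cast this
      have h2 : ((Tmax : ℝ) + 1) * (ε / (Tmax + 1)) = ε := by
        field_simp
      nlinarith
    linarith

end DP2

section Dual

set_option linter.unusedSectionVars false
variable {X : Type*} [Fintype X] [DecidableEq X] [Nonempty X]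

lemma sup'_hamming_eq (v : X → ℝ) {lam : ℝ} (hlam : 0 ≤ lam) (y : X) :
    (Finset.univ.sup' Finset.univ_nonempty fun l => -lam * hamming y l + v l)
      = max (v y) ((Finset.univ.sup' Finset.univ_nonempty v) - lam) := by
  set M := Finset.univ.sup' Finset.univ_nonempty v with hM
  apply le_antisymm
  · apply Finset.sup'_le
    intro l _
    by_cases h : y = l
    · subst h
      simp only [hamming_self, mul_zero, neg_zero, zero_add]
      exact le_max_left _ _
    · have hh : hamming y l = 1 := by simp [hamming, h]
      rw [hh]
      have hvl : v l ≤ M := Finset.le_sup' v (Finset.mem_univ l)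
      have : -lam * 1 + v l ≤ M - lam := by linarith
      exact this.trans (le_max_right _ _)
  · apply max_le
    · have := Finset.le_sup' (fun l => -lam * hamming y l + v l) (Finset.mem_univ y)
      simpa only [hamming_self, mul_zero, neg_zero, zero_add] using this
    · obtain ⟨m, _, hm⟩ := Finset.exists_mem_eq_sup' Finset.univ_nonempty v
      have h1 := Finset.le_sup' (fun l => -lam * hamming y l + v l) (Finset.mem_univ m)
      have hh1 := hamming_le_one y m
      have hh0 := hamming_nonneg y m
      have h2 : M - lam ≤ -lam * hamming y m + v m := by
        rw [← hm] at *
        nlinarith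
      exact h2.trans h1

lemma weak_dual (v q p : X → ℝ) (hq : IsProbVec q) (hp : IsProbVec p)
    {r lam : ℝ} (hlam : 0 ≤ lam) (hw : Wass hamming q p ≤ r) :
    ∑ y, q y * v y ≤ lam * r +
      ∑ y, max (v y) ((Finset.univ.sup' Finset.univ_nonempty v) - lam) * p y := by
  set M := Finset.univ.sup' Finset.univ_nonempty v with hM
  apply le_of_forall_pos_le_add
  intro ε hε
  have hε' : 0 < ε / (lam + 1) := by positivity
  -- get a near-optimal coupling
  have hne : {c | ∃ Γ : X × X → ℝ, IsCoupling q p Γ ∧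
      c = ∑ pr : X × X, Γ pr * hamming pr.1 pr.2}.Nonempty := by
    refine ⟨∑ pr : X × X, (q pr.1 * p pr.2) * hamming pr.1 pr.2,
      fun pr => q pr.1 * p pr.2, ⟨?_, ?_, ?_⟩, rfl⟩
    · intro pr; exact mul_nonneg (hq.1 pr.1) (hp.1 pr.2)
    · intro y
      show ∑ z, q y * p z = q y
      rw [← Finset.mul_sum, hp.2, mul_one]
    · intro z
      show ∑ y, q y * p z = p z
      rw [← Finset.sum_mul, hq.2, one_mul]
  have hlt : Wass hamming q p < r + ε / (lam + 1) := lt_of_le_of_lt hw (by linarith)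
  obtain ⟨c, hc, hclt⟩ := exists_lt_of_csInf_lt hne hlt
  obtain ⟨Γ, hΓ, rfl⟩ := hc
  have key : ∀ a b : X, Γ (a, b) * v a ≤
      Γ (a, b) * (lam * hamming a b + max (v b) (M - lam)) := by
    intro a b
    apply mul_le_mul_of_nonneg_left _ (hΓ.1 (a, b))
    have hsup := sup'_hamming_eq v hlam b
    have hb : -lam * hamming b a + v a ≤ max (v b) (M - lam) := by
      rw [← hsup]
      exact Finset.le_sup' (fun l => -lam * hamming b l + v l) (Finset.mem_univ a)
    rw [hamming_comm b a] at hb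
    linarith
  calc ∑ y, q y * v y = ∑ a, (∑ b, Γ (a, b)) * v a := by
        apply Finset.sum_congr rfl; intro a _; rw [hΓ.2.1 a]
    _ = ∑ a, ∑ b, Γ (a, b) * v a := by
        apply Finset.sum_congr rfl; intro a _; rw [Finset.sum_mul]
    _ ≤ ∑ a, ∑ b, Γ (a, b) * (lam * hamming a b + max (v b) (M - lam)) :=
        Finset.sum_le_sum fun a _ => Finset.sum_le_sum fun b _ => key a b
    _ = (∑ a, ∑ b, lam * (Γ (a, b) * hamming a b))
        + (∑ a, ∑ b, Γ (a, b) * max (v b) (M - lam)) := by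
        rw [← Finset.sum_add_distrib]
        apply Finset.sum_congr rfl; intro a _
        rw [← Finset.sum_add_distrib]
        apply Finset.sum_congr rfl; intro b _
        ring
    _ = lam * (∑ pr : X × X, Γ pr * hamming pr.1 pr.2)
        + ∑ b, (∑ a, Γ (a, b)) * max (v b) (M - lam) := by
        congr 1
        · rw [Fintype.sum_prod_type, Finset.mul_sum]
          apply Finset.sum_congr rfl; intro a _
          rw [Finset.mul_sum]
        · rw [Finset.sum_comm]
          apply Finset.sum_congr rfl; intro b _
          rw [Finset.sum_mul]
    _ ≤ lam * (r + ε / (lam + 1)) + ∑ b, p b * max (v b) (M - lam) := by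
        have h1 : lam * (∑ pr : X × X, Γ pr * hamming pr.1 pr.2) ≤ lam * (r + ε / (lam + 1)) :=
          mul_le_mul_of_nonneg_left (le_of_lt hclt) hlam
        have h2 : ∀ b, (∑ a, Γ (a, b)) * max (v b) (M - lam) = p b * max (v b) (M - lam) :=
          fun b => by rw [hΓ.2.2 b]
        rw [Finset.sum_congr rfl fun b _ => h2 b]
        linarith
    _ ≤ (lam * r + ∑ y, max (v y) (M - lam) * p y) + ε := by
        have : lam * (ε / (lam + 1)) ≤ ε := by
          rw [div_eq_inv_mul, ← mul_assoc]
          have h1 : lam * (lam + 1)⁻¹ ≤ 1 := by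
            rw [mul_inv_le_iff₀ (by linarith)]; linarith
          nlinarith
        have h3 : ∑ b, p b * max (v b) (M - lam) = ∑ y, max (v y) (M - lam) * p y := by
          apply Finset.sum_congr rfl; intro b _; ring
        linarith [h3]

end Dual

section Strong

set_option linter.unusedSectionVars false
variable {X : Type*} [Fintype X] [DecidableEq X] [Nonempty X]

lemma strong_dual (v p : X → ℝ) (hv0 : ∀ l, 0 ≤ v l) (hp : IsProbVec p) {r : ℝ} (hr : 0 ≤ r) :
    ∃ q : X → ℝ, IsProbVec q ∧ Wass hamming q p ≤ r ∧
      ∃ lam : ℝ, 0 ≤ lam ∧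
        lam * r + ∑ y, max (v y) ((Finset.univ.sup' Finset.univ_nonempty v) - lam) * p y
          ≤ ∑ y, q y * v y := by
  classical
  set M := Finset.univ.sup' Finset.univ_nonempty v with hMdef
  obtain ⟨m, _, hm⟩ := Finset.exists_mem_eq_sup' Finset.univ_nonempty v
  have hvm : v m = M := hm.symm
  have hM0 : 0 ≤ M := by rw [← hvm]; exact hv0 m
  set f : ℝ → ℝ := fun lam => lam * r + ∑ y, max (v y) (M - lam) * p y with hfdef
  have hf : Continuous f := by
    apply Continuous.add (continuous_id.mul continuous_const)
    apply continuous_finset_sum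
    intro y _
    exact (Continuous.max continuous_const (continuous_const.sub continuous_id)).mul
      continuous_const
  obtain ⟨lam, hlamI, hmin⟩ :=
    isCompact_Icc.exists_isMinOn (Set.nonempty_Icc.mpr hM0) hf.continuousOn
  have hminle : ∀ w ∈ Set.Icc (0:ℝ) M, f lam ≤ f w := fun w hw => isMinOn_iff.mp hmin w hw
  have hlam0 : 0 ≤ lam := hlamI.1
  have hlamM : lam ≤ M := hlamI.2
  set a : ℝ := ∑ y, if v y < M - lam then p y else 0 with hadef
  set pB : ℝ := ∑ y, if v y = M - lam then p y else 0 with hpBdef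
  have ha0 : 0 ≤ a := Finset.sum_nonneg fun y _ => by
    split
    · exact hp.1 y
    · exact le_refl 0
  have hpB0 : 0 ≤ pB := Finset.sum_nonneg fun y _ => by
    split
    · exact hp.1 y
    · exact le_refl 0
  -- Claim 1 : a ≤ r
  have claim1 : a ≤ r := by
    by_cases hA : ∃ y, v y < M - lam
    · obtain ⟨y₀, hy₀⟩ := hA
      set F : Finset X := Finset.univ.filter (fun y => v y < M - lam) with hFdef
      have hF : F.Nonempty := ⟨y₀, Finset.mem_filter.mpr ⟨Finset.mem_univ _, hy₀⟩⟩
      set ε : ℝ := F.inf' hF (fun y => M - lam - v y) with hεdef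
      have hε0 : 0 < ε := by
        rw [hεdef, Finset.lt_inf'_iff]
        intro y hy
        have := (Finset.mem_filter.mp hy).2
        linarith
      have hεle : ε ≤ M - lam - v y₀ :=
        Finset.inf'_le (fun y => M - lam - v y)
          (Finset.mem_filter.mpr ⟨Finset.mem_univ y₀, hy₀⟩)
      have hεM : ε ≤ M - lam := by have := hv0 y₀; linarith
      have hsum : ∑ y, max (v y) (M - (lam + ε)) * p y
          = (∑ y, max (v y) (M - lam) * p y) - ε * a := by
        have hptwise : ∀ y, max (v y) (M - (lam + ε)) * p y
            = max (v y) (M - lam) * p y - ε * (if v y < M - lam then p y else 0) := by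
          intro y
          by_cases h : v y < M - lam
          · have h2 : ε ≤ M - lam - v y := by
              rw [hεdef]
              exact Finset.inf'_le (fun z => M - lam - v z)
                (Finset.mem_filter.mpr ⟨Finset.mem_univ y, h⟩)
            rw [max_eq_right h.le, max_eq_right (by linarith : v y ≤ M - (lam + ε)),
              if_pos h]
            ring
          · have h' : M - lam ≤ v y := not_lt.mp h
            rw [max_eq_left h', max_eq_left (by linarith : M - (lam + ε) ≤ v y), if_neg h]
            ring
        rw [Finset.sum_congr rfl fun y _ => hptwise y, Finset.sum_sub_distrib,
          ← Finset.mul_sum]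
      have hle := hminle (lam + ε) ⟨by linarith, by linarith⟩
      simp only [hfdef] at hle
      rw [hsum] at hle
      have : ε * a ≤ ε * r := by linarith
      exact le_of_mul_le_mul_left this hε0
    · push_neg at hA
      have : a = 0 := Finset.sum_eq_zero fun y _ => if_neg (not_lt.mpr (hA y))
      linarith
  -- Claim 2 : 0 < lam → r ≤ a + pB
  have claim2 : 0 < lam → r ≤ a + pB := by
    intro hlampos
    set D : Finset X := Finset.univ.filter (fun y => M - lam < v y) with hDdef
    have hmD : m ∈ D := Finset.mem_filter.mpr ⟨Finset.mem_univ _, by rw [hvm]; linarith⟩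
    have hD : D.Nonempty := ⟨m, hmD⟩
    set ε : ℝ := min lam (D.inf' hD (fun y => v y - (M - lam))) with hεdef
    have hε0 : 0 < ε := by
      rw [hεdef, lt_min_iff]
      refine ⟨hlampos, ?_⟩
      rw [Finset.lt_inf'_iff]
      intro y hy
      have := (Finset.mem_filter.mp hy).2
      linarith
    have hεlam : ε ≤ lam := min_le_left _ _
    have hsum : ∑ y, max (v y) (M - (lam - ε)) * p y
        = (∑ y, max (v y) (M - lam) * p y) + ε * (a + pB) := by
      have hptwise : ∀ y, max (v y) (M - (lam - ε)) * p y
          = max (v y) (M - lam) * p y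
            + ε * ((if v y < M - lam then p y else 0) + (if v y = M - lam then p y else 0)) := by
        intro y
        by_cases h : M - lam < v y
        · have h2 : ε ≤ v y - (M - lam) := by
            refine le_trans (min_le_right _ _) ?_
            exact Finset.inf'_le (fun z => v z - (M - lam))
              (Finset.mem_filter.mpr ⟨Finset.mem_univ y, h⟩)
          rw [max_eq_left h.le, max_eq_left (by linarith : M - (lam - ε) ≤ v y),
            if_neg (not_lt.mpr h.le), if_neg (by intro hc; rw [hc] at h; linarith)]
          ring
        · have h' : v y ≤ M - lam := not_lt.mp h
          rw [max_eq_right h', max_eq_right (by linarith : v y ≤ M - (lam - ε))]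
          rcases lt_or_eq_of_le h' with h2 | h2
          · rw [if_pos h2, if_neg (ne_of_lt h2)]
            ring
          · rw [if_neg (by rw [h2]; exact lt_irrefl _), if_pos h2]
            ring
      rw [Finset.sum_congr rfl fun y _ => hptwise y, Finset.sum_add_distrib,
        ← Finset.mul_sum, Finset.sum_add_distrib]
    have hle := hminle (lam - ε) ⟨by linarith, by linarith⟩
    simp only [hfdef] at hle
    rw [hsum] at hle
    have : ε * r ≤ ε * (a + pB) := by linarith
    exact le_of_mul_le_mul_left this hε0
  -- the construction
  set c : ℝ := if pB = 0 then 0 else min (r - a) pB / pB with hcdef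
  have hra : 0 ≤ r - a := by linarith
  have hc0 : 0 ≤ c := by
    rw [hcdef]
    split
    · exact le_refl 0
    · exact div_nonneg (le_min hra hpB0) hpB0
  have hc1 : c ≤ 1 := by
    rw [hcdef]
    split
    · norm_num
    · rename_i h
      rw [div_le_one (lt_of_le_of_ne hpB0 (Ne.symm h))]
      exact min_le_right _ _
  have hcpB : c * pB = min (r - a) pB := by
    rw [hcdef]
    split
    · rename_i h
      rw [h, mul_zero, min_eq_right hra]
    · rename_i h
      rw [div_mul_cancel₀ _ h]
  set ρ : X → ℝ := fun y => (if v y < M - lam then p y else 0)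
      + c * (if v y = M - lam then p y else 0) with hρdef
  have hρ0 : ∀ y, 0 ≤ ρ y := by
    intro y
    apply add_nonneg
    · split
      · exact hp.1 y
      · exact le_refl 0
    · apply mul_nonneg hc0
      split
      · exact hp.1 y
      · exact le_refl 0
  have hρle : ∀ y, ρ y ≤ p y := by
    intro y
    simp only [hρdef]
    by_cases h1 : v y < M - lam
    · rw [if_pos h1, if_neg (ne_of_lt h1)]
      simp
    · rw [if_neg h1]
      by_cases h2 : v y = M - lam
      · rw [if_pos h2, zero_add]
        nlinarith [hp.1 y]
      · rw [if_neg h2]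
        simpa using hp.1 y
  set rtot : ℝ := a + c * pB with hrtotdef
  have hsumrho : ∑ y, ρ y = rtot := by
    simp only [hρdef, hrtotdef]
    rw [Finset.sum_add_distrib, ← Finset.mul_sum]
  have hrtot0 : 0 ≤ rtot := add_nonneg ha0 (mul_nonneg hc0 hpB0)
  have hrtotr : rtot ≤ r := by
    rw [hrtotdef, hcpB]
    have := min_le_left (r - a) pB
    linarith
  set q : X → ℝ := fun y => p y - ρ y + (if y = m then rtot else 0) with hqdef
  have hq : IsProbVec q := by
    constructor
    · intro y
      have := hρle y
      apply add_nonneg (by linarith)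
      split
      · exact hrtot0
      · exact le_refl 0
    · simp only [hqdef]
      rw [Finset.sum_add_distrib, Finset.sum_sub_distrib, hsumrho, hp.2,
        Finset.sum_ite_eq' Finset.univ m (fun _ => rtot)]
      simp
  refine ⟨q, hq, ?_, lam, hlam0, ?_⟩
  · -- Wasserstein feasibility
    set Γ : X × X → ℝ := fun pr => (if pr.1 = pr.2 then p pr.1 - ρ pr.1 else 0)
        + (if pr.1 = m then ρ pr.2 else 0) with hΓdef
    have hcoup : IsCoupling q p Γ := by
      refine ⟨?_, ?_, ?_⟩
      · intro pr
        apply add_nonneg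
        · split
          · have := hρle pr.1; linarith
          · exact le_refl 0
        · split
          · exact hρ0 pr.2
          · exact le_refl 0
      · intro y
        show ∑ z, ((if y = z then p y - ρ y else 0) + (if y = m then ρ z else 0)) = q y
        rw [Finset.sum_add_distrib, Finset.sum_ite_eq Finset.univ y (fun _ => p y - ρ y)]
        simp only [Finset.mem_univ, if_true]
        congr 1
        by_cases h : y = m
        · rw [if_pos h]
          simp only [if_pos h, hsumrho]
        · rw [if_neg h]
          simp [h]
      · intro z
        show ∑ y, ((if y = z then p y - ρ y else 0) + (if y = m then ρ z else 0)) = p z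
        rw [Finset.sum_add_distrib, Finset.sum_ite_eq' Finset.univ z (fun y => p y - ρ y),
          Finset.sum_ite_eq' Finset.univ m (fun _ => ρ z)]
        simp
    have hcost : ∑ pr : X × X, Γ pr * hamming pr.1 pr.2 ≤ r := by
      have hptwise : ∀ pr : X × X, Γ pr * hamming pr.1 pr.2
          ≤ (if pr.1 = m then ρ pr.2 * hamming pr.1 pr.2 else 0) := by
        intro pr
        simp only [hΓdef]
        by_cases h1 : pr.1 = pr.2
        · rw [if_pos h1]
          have : hamming pr.1 pr.2 = 0 := by rw [h1]; exact hamming_self _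
          rw [this, mul_zero]
          split
          · rw [mul_zero]
          · exact le_refl 0
        · rw [if_neg h1, zero_add]
          by_cases h2 : pr.1 = m
          · rw [if_pos h2, if_pos h2]
          · rw [if_neg h2, if_neg h2, zero_mul]
      calc ∑ pr : X × X, Γ pr * hamming pr.1 pr.2
          ≤ ∑ pr : X × X, (if pr.1 = m then ρ pr.2 * hamming pr.1 pr.2 else 0) :=
            Finset.sum_le_sum fun pr _ => hptwise pr
        _ = ∑ b, ρ b * hamming m b := by
            rw [Fintype.sum_prod_type]
            rw [Finset.sum_comm]
            apply Finset.sum_congr rfl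
            intro b _
            rw [Finset.sum_ite_eq' Finset.univ m (fun aa => ρ b * hamming aa b)]
            simp
        _ ≤ ∑ b, ρ b := Finset.sum_le_sum fun b _ => by
            have h1 := hamming_le_one m b
            have h2 := hρ0 b
            nlinarith
        _ = rtot := hsumrho
        _ ≤ r := hrtotr
    have h1 : Wass hamming q p ≤ ∑ pr : X × X, Γ pr * hamming pr.1 pr.2 :=
      csInf_le (wassSet_bddBelow _ _) ⟨Γ, hcoup, rfl⟩
    linarith
  · -- value bound
    have hqv : ∑ y, q y * v y = (∑ y, p y * v y) - (∑ y, ρ y * v y) + rtot * M := by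
      have hpt : ∀ y, q y * v y
          = p y * v y - ρ y * v y + (if y = m then rtot * v y else 0) := by
        intro y
        simp only [hqdef]
        by_cases h : y = m
        · rw [if_pos h, if_pos h]; ring
        · rw [if_neg h, if_neg h]; ring
      rw [Finset.sum_congr rfl fun y _ => hpt y, Finset.sum_add_distrib,
        Finset.sum_sub_distrib, Finset.sum_ite_eq' Finset.univ m (fun y => rtot * v y)]
      simp only [Finset.mem_univ, if_true]
      rw [hvm]
    have hρMv : ∑ y, ρ y * (M - v y) = rtot * M - ∑ y, ρ y * v y := by
      have hpt : ∀ y, ρ y * (M - v y) = ρ y * M - ρ y * v y := fun y => by ring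
      rw [Finset.sum_congr rfl fun y _ => hpt y, Finset.sum_sub_distrib,
        ← Finset.sum_mul, hsumrho]
    have hkey1 : ∑ y, ρ y * (M - v y)
        = (∑ y, if v y < M - lam then p y * (M - v y) else 0) + c * lam * pB := by
      have hpt : ∀ y, ρ y * (M - v y)
          = (if v y < M - lam then p y * (M - v y) else 0)
            + c * lam * (if v y = M - lam then p y else 0) := by
        intro y
        simp only [hρdef]
        by_cases h1 : v y < M - lam
        · simp only [if_pos h1, if_neg (ne_of_lt h1)]
          ring
        · by_cases h2 : v y = M - lam
          · simp only [if_neg h1, if_pos h2]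
            have hMl : M - v y = lam := by rw [h2]; ring
            rw [hMl]
            ring
          · simp only [if_neg h1, if_neg h2]
            ring
      rw [Finset.sum_congr rfl fun y _ => hpt y, Finset.sum_add_distrib, ← Finset.mul_sum]
    have hkey2 : ∑ y, max (v y) (M - lam) * p y
        = (∑ y, p y * v y) + (∑ y, if v y < M - lam then p y * (M - v y) else 0)
          - lam * a := by
      have hpt : ∀ y, max (v y) (M - lam) * p y
          = p y * v y + (if v y < M - lam then p y * (M - v y) else 0)
            - lam * (if v y < M - lam then p y else 0) := by
        intro y
        by_cases h : v y < M - lam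
        · rw [max_eq_right h.le, if_pos h, if_pos h]
          ring
        · rw [max_eq_left (not_lt.mp h), if_neg h, if_neg h]
          ring
      rw [Finset.sum_congr rfl fun y _ => hpt y, Finset.sum_sub_distrib,
        Finset.sum_add_distrib, ← Finset.mul_sum]
    rw [hqv, hkey2]
    have h8 : c * lam * pB = lam * (c * pB) := by ring
    rw [hcpB] at h8
    have h9 : lam * r - lam * a ≤ lam * min (r - a) pB := by
      rcases eq_or_lt_of_le hlam0 with h0 | hpos
      · rw [← h0]; simp
      · have h5 : r - a ≤ pB := by linarith [claim2 hpos]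
        rw [min_eq_left h5]
        have : lam * (r - a) = lam * r - lam * a := by ring
        linarith
    linarith [hρMv, hkey1]

end Strong

section Core

set_option linter.unusedSectionVars false
variable {X : Type*} [Fintype X] [DecidableEq X] [Nonempty X]

lemma dual_core (v p : X → ℝ) (hv0 : ∀ l, 0 ≤ v l) (hp : IsProbVec p) {r : ℝ} (hr : 0 ≤ r) :
    sSup (primSet v p r) =
      sInf {s | ∃ lam : ℝ, 0 ≤ lam ∧
        s = lam * r + ∑ y, (Finset.univ.sup' Finset.univ_nonempty fun l =>
          -lam * hamming y l + v l) * p y} := by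
  set M := Finset.univ.sup' Finset.univ_nonempty v with hMdef
  have hsetrw : {s | ∃ lam : ℝ, 0 ≤ lam ∧
      s = lam * r + ∑ y, (Finset.univ.sup' Finset.univ_nonempty fun l =>
        -lam * hamming y l + v l) * p y}
      = {s | ∃ lam : ℝ, 0 ≤ lam ∧ s = lam * r + ∑ y, max (v y) (M - lam) * p y} := by
    have hsum : ∀ lam : ℝ, 0 ≤ lam →
        (∑ y, (Finset.univ.sup' Finset.univ_nonempty fun l =>
          -lam * hamming y l + v l) * p y) = ∑ y, max (v y) (M - lam) * p y :=
      fun lam hlam => Finset.sum_congr rfl fun y _ => by rw [sup'_hamming_eq v hlam y]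
    ext s
    constructor
    · rintro ⟨lam, hlam, rfl⟩
      exact ⟨lam, hlam, by rw [hsum lam hlam]⟩
    · rintro ⟨lam, hlam, rfl⟩
      exact ⟨lam, hlam, by rw [hsum lam hlam]⟩
  rw [hsetrw]
  have hdne : {s | ∃ lam : ℝ, 0 ≤ lam ∧
      s = lam * r + ∑ y, max (v y) (M - lam) * p y}.Nonempty :=
    ⟨0 * r + ∑ y, max (v y) (M - 0) * p y, 0, le_refl 0, rfl⟩
  have hdbdd : BddBelow {s | ∃ lam : ℝ, 0 ≤ lam ∧
      s = lam * r + ∑ y, max (v y) (M - lam) * p y} := by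
    refine ⟨0, ?_⟩
    rintro s ⟨lam, hlam, rfl⟩
    have h1 : 0 ≤ ∑ y, max (v y) (M - lam) * p y :=
      Finset.sum_nonneg fun y _ =>
        mul_nonneg (le_trans (hv0 y) (le_max_left _ _)) (hp.1 y)
    have := mul_nonneg hlam hr
    linarith
  have hpbdd : BddAbove (primSet v p r) :=
    primSet_bddAbove (B := M) fun y => by
      rw [hMdef]; exact Finset.le_sup' v (Finset.mem_univ y)
  apply le_antisymm
  · apply csSup_le (primSet_nonempty hp hr)
    rintro s ⟨q, hq, hw, rfl⟩
    apply le_csInf hdne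
    rintro d ⟨lam, hlam, rfl⟩
    exact weak_dual v q p hq hp hlam hw
  · obtain ⟨q, hq, hw, lam, hlam, hval⟩ := strong_dual v p hv0 hp hr
    calc sInf {s | ∃ lam : ℝ, 0 ≤ lam ∧ s = lam * r + ∑ y, max (v y) (M - lam) * p y}
        ≤ lam * r + ∑ y, max (v y) (M - lam) * p y := csInf_le hdbdd ⟨lam, hlam, rfl⟩
      _ ≤ ∑ y, q y * v y := hval
      _ ≤ sSup (primSet v p r) := le_csSup hpbdd ⟨q, hq, hw, rfl⟩

lemma Wfun_of_mem_U {U E : Finset X} {P : ℕ → X → X → ℝ} {r : ℝ} {l : X} (hl : l ∈ U) :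
    ∀ n k, Wfun U E P r n k l = 1 := by
  intro n k
  cases n <;> simp [Wfun, hl]

lemma Wfun_of_mem_E {U E : Finset X} (hUE : Disjoint U E) {P : ℕ → X → X → ℝ} {r : ℝ}
    {l : X} (hl : l ∈ E) : ∀ n k, Wfun U E P r n k l = 0 := by
  intro n k
  have hlU : l ∉ U := Finset.disjoint_right.mp hUE hl
  cases n <;> simp [Wfun, hl, hlU]

end Core


/-- Empirical dual recursion (Lemma 5): the dual recursion for the empirical robust safety
function with rectangular Wasserstein (Hamming) ambiguity sets of radius `r` around the
empirical centers `Phat`. -/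
theorem empirical_robust_safety_dual_recursion
    {X : Type*} [Fintype X] [DecidableEq X] [Nonempty X]
    (U E : Finset X) (hUE : Disjoint U E)
    (Tmax : ℕ) (Phat : ℕ → X → X → ℝ) (hPhat : ∀ k y, IsProbVec (Phat k y))
    (r : ℝ) (hr : 0 ≤ r)
    (t : ℕ) (ht : t < Tmax) (x : X) (hxU : x ∉ U) (hxE : x ∉ E) :
    robustSafety U E Phat r Tmax t x =
      sInf {s | ∃ lam : ℝ, 0 ≤ lam ∧
        s = lam * r +
          ∑ y, (Finset.univ.sup' Finset.univ_nonempty fun l =>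
              -lam * hamming y l + (if l ∈ U then (1 : ℝ) else 0) +
                (if l ∈ U ∨ l ∈ E then 0 else robustSafety U E Phat r Tmax (t + 1) l)) *
            Phat t x y} := by
  have ht1 : t + 1 ≤ Tmax := ht
  set n := Tmax - (t + 1) with hn
  have hv : ∀ l, (if l ∈ U then (1:ℝ) else 0) +
      (if l ∈ U ∨ l ∈ E then 0 else robustSafety U E Phat r Tmax (t + 1) l)
      = Wfun U E Phat r n (t + 1) l := by
    intro l
    by_cases hU : l ∈ U
    · simp [hU, Wfun_of_mem_U hU]
    · by_cases hE : l ∈ E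
      · simp [hU, hE, Wfun_of_mem_E hUE hE]
      · have h1 : (if l ∈ U then (1:ℝ) else 0) = 0 := if_neg hU
        have h2 : (if l ∈ U ∨ l ∈ E then (0:ℝ) else robustSafety U E Phat r Tmax (t+1) l)
            = robustSafety U E Phat r Tmax (t+1) l := if_neg (by simp [hU, hE])
        rw [h1, h2, zero_add,
          robustSafety_eq_Wfun U E Phat r hPhat hr Tmax (t+1) ht1 l, ← hn]
  have hts : Tmax - t = n + 1 := by omega
  have hmain : robustSafety U E Phat r Tmax t x
      = sSup (primSet (Wfun U E Phat r n (t + 1)) (Phat t x) r) := by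
    rw [robustSafety_eq_Wfun U E Phat r hPhat hr Tmax t (le_of_lt ht) x, hts]
    simp only [Wfun, if_neg hxU, if_neg hxE]
  rw [hmain, dual_core (Wfun U E Phat r n (t + 1)) (Phat t x)
    (fun l => Wfun_nonneg U E Phat r n (t + 1) l) (hPhat t x) hr]
  have hfeq : ∀ (lam : ℝ) (y : X),
      (Finset.univ.sup' Finset.univ_nonempty fun l =>
        -lam * hamming y l + (if l ∈ U then (1:ℝ) else 0) +
          (if l ∈ U ∨ l ∈ E then 0 else robustSafety U E Phat r Tmax (t + 1) l))
      = (Finset.univ.sup' Finset.univ_nonempty fun l =>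
        -lam * hamming y l + Wfun U E Phat r n (t + 1) l) := by
    intro lam y
    congr 1
    funext l
    rw [add_assoc, hv l]
  have hsum : ∀ lam : ℝ,
      (∑ y, (Finset.univ.sup' Finset.univ_nonempty fun l =>
          -lam * hamming y l + (if l ∈ U then (1:ℝ) else 0) +
            (if l ∈ U ∨ l ∈ E then 0 else robustSafety U E Phat r Tmax (t + 1) l)) *
          Phat t x y)
      = ∑ y, (Finset.univ.sup' Finset.univ_nonempty fun l =>
          -lam * hamming y l + Wfun U E Phat r n (t + 1) l) * Phat t x y :=
    fun lam => Finset.sum_congr rfl fun y _ => by rw [hfeq lam y]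
  congr 1
  ext s
  constructor
  · rintro ⟨lam, hlam, rfl⟩
    exact ⟨lam, hlam, by rw [hsum lam]⟩
  · rintro ⟨lam, hlam, rfl⟩
    exact ⟨lam, hlam, by rw [hsum lam]⟩
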